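/- Let A be a k-algebra and τ: A → M_d(B) an injective algebra homomorphism to a matrix ring over a commutative integral domain B, such that each idempotent e_i (i = 1,…,d) maps to the diagonal matrix unit e_{ii}, and every element of e_j A e_i maps into B·e_{ji}. Then A is cancellative: for all p, q ∈ e_j A e_i and r ∈ e_k A e_j with rp = rq ≠ 0, one has p = q; similarly pr = qr ≠ 0 implies p = q. -/

import Mathlib

/-- A k-algebra admitting an injective algebra homomorphism (impression)
τ : A → M_d(B) over a commutative integral domain B, with τ(e_i) = e_{ii} and
τ(e_j A e_i) ⊆ B·e_{ji}, is cancellative: rp = rq ≠ 0 implies p = q, and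
pr = qr ≠ 0 implies p = q. -/
theorem stmt_4 {k B A : Type} [Field k] [CommRing B] [IsDomain B] [Algebra k B]
    [Ring A] [Algebra k A] {d : ℕ}
    (τ : A →ₐ[k] Matrix (Fin d) (Fin d) B) (hinj : Function.Injective τ)
    (e : Fin d → A)
    (he : ∀ i, τ (e i) = Matrix.single i i 1)
    (hcorner : ∀ (i j : Fin d) (x : A), e j * x * e i = x →
      ∃ b : B, τ x = Matrix.single j i b) :
    ∀ (i j l : Fin d) (p q r : A),
      e j * p * e i = p → e j * q * e i = q →
      ((e l * r * e j = r ∧ r * p = r * q ∧ r * p ≠ 0) ∨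
       (e i * r * e l = r ∧ p * r = q * r ∧ p * r ≠ 0)) → p = q := by
  intro i j l p q r hp hq hcase
  obtain ⟨bp, hbp⟩ := hcorner i j p hp
  obtain ⟨bq, hbq⟩ := hcorner i j q hq
  apply hinj
  rw [hbp, hbq]
  rcases hcase with ⟨hr, heq, hne⟩ | ⟨hr, heq, hne⟩
  · obtain ⟨br, hbr⟩ := hcorner j l r hr
    have h1 : τ (r * p) = Matrix.single l i (br * bp) := by
      rw [map_mul, hbr, hbp, Matrix.single_mul_single_same]
    have h2 : τ (r * q) = Matrix.single l i (br * bq) := by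
      rw [map_mul, hbr, hbq, Matrix.single_mul_single_same]
    have hbrne : br ≠ 0 := by
      rintro rfl
      exact hne (hinj (by simp [h1]))
    have : br * bp = br * bq := by
      have := h1.symm.trans (by rw [heq, h2])
      have := congrFun (congrFun this l) i
      simpa using this
    have : bp = bq := mul_left_cancel₀ hbrne this
    rw [this]
  · obtain ⟨br, hbr⟩ := hcorner l i r hr
    have h1 : τ (p * r) = Matrix.single j l (bp * br) := by
      rw [map_mul, hbp, hbr, Matrix.single_mul_single_same]
    have h2 : τ (q * r) = Matrix.single j l (bq * br) := by
      rw [map_mul, hbq, hbr, Matrix.single_mul_single_same]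
    have hbrne : br ≠ 0 := by
      rintro rfl
      exact hne (hinj (by simp [h1]))
    have : bp * br = bq * br := by
      have := h1.symm.trans (by rw [heq, h2])
      have := congrFun (congrFun this j) l
      simpa using this
    have : bp = bq := mul_right_cancel₀ hbrne this
    rw [this]
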